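/- If F is a connected Set-functor (F(1) ≅ 1) such that the unique natural transformation ι : Id → F has some component ι_X that is not injective for a set X with at least two elements, then every component ι_Y is a constant map. -/

import Mathlib

open CategoryTheory

universe u

theorem noninjective_unit_implies_all_components_constant
    (F : Type u ⥤ Type u)
    (hconn : Nonempty (F.obj (PUnit : Type u) ≃ PUnit))
    (ι : 𝟭 (Type u) ⟶ F)
    (X : Type u) (x₁ x₂ : X) (hx : x₁ ≠ x₂)
    (hnotinj : ¬ Function.Injective (ι.app X)) :
    ∀ (Y : Type u) (y₁ y₂ : Y), ι.app Y y₁ = ι.app Y y₂ := by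
  intro Y y₁ y₂
  rw [Function.not_injective_iff] at hnotinj
  obtain ⟨a, b, hab, hne⟩ := hnotinj
  classical
  let f : X → Y := fun x => if x = a then y₁ else y₂
  have h1 := types_congr_hom (ι.naturality (TypeCat.ofHom f)) a
  have h2 := types_congr_hom (ι.naturality (TypeCat.ofHom f)) b
  simp only [CategoryTheory.types_comp_apply, CategoryTheory.Functor.id_map, TypeCat.ofHom_apply] at h1 h2
  have : f a = y₁ := by simp [f]
  have hb : f b = y₂ := by simp [f, hne.symm]
  rw [this] at h1
  rw [hb] at h2
  rw [h1, h2, hab]
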